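/- In the graph G, for all a≠b in {1,…,n}: Max-Dist(S_a,S_b) = (2d+1)·M + max_{i∈{1,…,d}} (v_a[i]+v_b[i]). Consequently, Max-Dist(S_a,S_b) ≤ (2d+1)·M + 1 if v_a and v_b are orthogonal, and Max-Dist(S_a,S_b) = (2d+1)·M + 2 otherwise. -/
import Mathlib


open Finset

namespace OVGadget

inductive V (n d : ℕ) : Type
  | U : Fin n → Fin d → V n d
  | U' : Fin n → Fin d → V n d
  | l : V n d
  | r : V n d
  deriving DecidableEq, Fintype

def M : ℕ := 4

/-- One-directional edge-weight table encoding the vectors `v_1, …, v_n`; a value `0` means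
"no edge".  Here `j : Fin d` is 0-indexed, so `U k j` is the paper's `u_{k+1, j+1}`, whence
the weights `(j+1)·M + v_k[j]` and `(2d+1−(j+1))·M + v_k[j] = (2d−j)·M + v_k[j]`. -/
def wt0 (n d : ℕ) (v : Fin n → Fin d → Fin 2) : V n d → V n d → ℕ
  | V.U k j, V.l => (j.val + 1) * M + (v k j).val
  | V.U' k j, V.l => (2 * d - j.val) * M + (v k j).val
  | V.U k j, V.r => (2 * d - j.val) * M + (v k j).val
  | V.U' k j, V.r => (j.val + 1) * M + (v k j).val
  | _, _ => 0

/-- The symmetrized edge weight. -/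
def wtE (n d : ℕ) (v : Fin n → Fin d → Fin 2) (x y : V n d) : ℕ :=
  wt0 n d v x y + wt0 n d v y x

/-- The graph `G`: `x` and `y` are adjacent iff the weight table records an edge. -/
def G (n d : ℕ) (v : Fin n → Fin d → Fin 2) : SimpleGraph (V n d) :=
  SimpleGraph.fromRel fun x y => wt0 n d v x y ≠ 0

/-- The total weight of a walk. -/
def wWeight {n d : ℕ} {v : Fin n → Fin d → Fin 2} {x y : V n d}
    (p : (G n d v).Walk x y) : ℕ :=
  (p.darts.map fun e => wtE n d v e.toProd.1 e.toProd.2).sum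

/-- The weighted shortest-path distance: the minimum over paths from `x` to `y` of the sum
of the edge weights along the path. -/
noncomputable def dist (n d : ℕ) (v : Fin n → Fin d → Fin 2) (x y : V n d) : ℕ :=
  sInf {m | ∃ p : (G n d v).Walk x y, p.IsPath ∧ wWeight p = m}

/-- Membership in the set `S_k = {u_{k,j}, u'_{k,j} : j}`. -/
def inS (n d : ℕ) (k : Fin n) (x : V n d) : Prop :=
  (∃ j : Fin d, x = V.U k j) ∨ (∃ j : Fin d, x = V.U' k j)

/-- The set `S_k` as a finite set of vertices. -/
def SF (n d : ℕ) (k : Fin n) : Finset (V n d) :=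
  (Finset.univ.image fun j : Fin d => V.U k j)
    ∪ (Finset.univ.image fun j : Fin d => V.U' k j)

/-- `Max-Dist(S_a, S_b) = max_{x ∈ S_a, y ∈ S_b} d(x, y)`. -/
noncomputable def maxDist (n d : ℕ) (v : Fin n → Fin d → Fin 2) (a b : Fin n) : ℕ :=
  (SF n d a ×ˢ SF n d b).sup fun p => dist n d v p.1 p.2
section Aux
variable {n d : ℕ} {v : Fin n → Fin d → Fin 2}

def isU (x : V n d) : Prop := ∃ k j, x = V.U k j ∨ x = V.U' k j

lemma wtE_symm (x y : V n d) : wtE n d v x y = wtE n d v y x := Nat.add_comm _ _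

lemma isU_ne {x : V n d} (hx : isU x) : x ≠ V.l ∧ x ≠ V.r := by
  obtain ⟨k, j, h | h⟩ := hx <;> subst h <;> simp

lemma wt_facts {x : V n d} (hx : isU x) :
    4 ≤ wtE n d v x V.l ∧ 4 ≤ wtE n d v x V.r ∧
    (2*d+1)*4 ≤ wtE n d v x V.l + wtE n d v x V.r ∧
    wtE n d v x V.l + wtE n d v x V.r ≤ (2*d+1)*4 + 2 := by
  obtain ⟨k, j, h | h⟩ := hx <;> subst h <;>
  · have hj := j.isLt
    have hv := (v k j).isLt
    simp only [wtE, wt0, M]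
    omega

lemma adj_iff (x y : V n d) : (G n d v).Adj x y ↔
    x ≠ y ∧ (wt0 n d v x y ≠ 0 ∨ wt0 n d v y x ≠ 0) :=
  SimpleGraph.fromRel_adj _ x y

lemma adj_ul {x : V n d} (hx : isU x) :
    (G n d v).Adj x V.l ∧ (G n d v).Adj x V.r := by
  obtain ⟨k, j, h | h⟩ := hx <;> subst h <;>
  · have hj := j.isLt
    have hv := (v k j).isLt
    constructor <;> rw [adj_iff] <;>
      exact ⟨by simp, Or.inl (by simp only [wt0, M]; omega)⟩

lemma neighbors_of_u {x z : V n d} (hx : isU x) (h : (G n d v).Adj x z) :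
    z = V.l ∨ z = V.r := by
  obtain ⟨k, j, hh | hh⟩ := hx <;> subst hh <;> cases z <;>
    simp_all [adj_iff, wt0]

lemma neighbors_of_c {z w : V n d} (hz : z = V.l ∨ z = V.r) (h : (G n d v).Adj z w) :
    isU w := by
  cases w with
  | U k j => exact ⟨k, j, Or.inl rfl⟩
  | U' k j => exact ⟨k, j, Or.inr rfl⟩
  | l => rcases hz with h' | h' <;> subst h' <;> simp_all [adj_iff, wt0]
  | r => rcases hz with h' | h' <;> subst h' <;> simp_all [adj_iff, wt0]

lemma wWeight_cons {x c y : V n d} (h : (G n d v).Adj x c) (q : (G n d v).Walk c y) :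
    wWeight (SimpleGraph.Walk.cons h q) = wtE n d v x c + wWeight q := by
  simp [wWeight]

lemma wWeight_nil {x : V n d} : wWeight (SimpleGraph.Walk.nil : (G n d v).Walk x x) = 0 := by
  simp [wWeight]

end Aux

section Main
variable {n d : ℕ} {v : Fin n → Fin d → Fin 2}

lemma weight_lb {x y : V n d} (hx : isU x) (hy : isU y) (hxy : x ≠ y)
    (p : (G n d v).Walk x y) (hp : p.IsPath) :
    min (wtE n d v x V.l + wtE n d v V.l y) (wtE n d v x V.r + wtE n d v V.r y)
      ≤ wWeight p := by
  cases p with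
  | nil => exact absurd rfl hxy
  | @cons _ c _ h₁ q₁ =>
    have hc := neighbors_of_u hx h₁
    cases q₁ with
    | nil =>
      obtain ⟨k, j, h | h⟩ := hy <;> rcases hc with rfl | rfl <;> simp_all
    | @cons _ z _ h₂ q₂ =>
      have hz := neighbors_of_c hc h₂
      cases q₂ with
      | nil =>
        -- two-edge path x - c - y
        rw [wWeight_cons, wWeight_cons, wWeight_nil]
        rcases hc with rfl | rfl
        · rw [wtE_symm (v := v) V.l y] at *
          omega
        · rw [wtE_symm (v := v) V.r y] at *
          omega
      | @cons _ c₂ _ h₃ q₃ =>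
        have hc₂ := neighbors_of_u hz h₃
        rw [SimpleGraph.Walk.cons_isPath_iff] at hp
        obtain ⟨hp, hxs⟩ := hp
        rw [SimpleGraph.Walk.cons_isPath_iff] at hp
        obtain ⟨hp, hcs⟩ := hp
        have hcc : c ≠ c₂ := by
          intro h'
          subst h'
          rw [SimpleGraph.Walk.support_cons] at hcs
          exact hcs (List.mem_cons_of_mem _ q₃.start_mem_support)
        cases q₃ with
        | nil =>
          obtain ⟨k, j, h | h⟩ := hy <;> rcases hc₂ with rfl | rfl <;> simp_all
        | @cons _ w _ h₄ q₄ =>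
          have hw := neighbors_of_c hc₂ h₄
          rw [wWeight_cons, wWeight_cons, wWeight_cons, wWeight_cons]
          have f1 := wt_facts (v := v) hx
          have f2 := wt_facts (v := v) hy
          have f3 := wt_facts (v := v) hz
          have f4 := wt_facts (v := v) hw
          rw [wtE_symm (v := v) V.l y, wtE_symm (v := v) V.r y]
          have h5 : wtE n d v c z + wtE n d v z c₂ = wtE n d v z V.l + wtE n d v z V.r := by
            rcases hc with rfl | rfl <;> rcases hc₂ with rfl | rfl
            · exact absurd rfl hcc
            · rw [wtE_symm (v := v) V.l z]
            · rw [wtE_symm (v := v) V.r z]; omega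
            · exact absurd rfl hcc
          have h6 : wtE n d v x c = wtE n d v x V.l ∨ wtE n d v x c = wtE n d v x V.r := by
            rcases hc with rfl | rfl
            · exact Or.inl rfl
            · exact Or.inr rfl
          have h7 : wtE n d v c₂ w = wtE n d v w V.l ∨ wtE n d v c₂ w = wtE n d v w V.r := by
            rcases hc₂ with rfl | rfl
            · exact Or.inl (wtE_symm _ _)
            · exact Or.inr (wtE_symm _ _)
          omega

lemma dist_eq {x y : V n d} (hx : isU x) (hy : isU y) (hxy : x ≠ y) :
    dist n d v x y =
      min (wtE n d v x V.l + wtE n d v V.l y) (wtE n d v x V.r + wtE n d v V.r y) := by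
  have hxl := adj_ul (v := v) hx
  have hyl := adj_ul (v := v) hy
  have hxne := isU_ne hx
  have hyne := isU_ne hy
  have hpl : (SimpleGraph.Walk.cons hxl.1
      (SimpleGraph.Walk.cons hyl.1.symm SimpleGraph.Walk.nil)).IsPath := by
    rw [SimpleGraph.Walk.isPath_def]
    simp [hxne.1, hxy, hyne.1, Ne.symm hyne.1]
  have hpr : (SimpleGraph.Walk.cons hxl.2
      (SimpleGraph.Walk.cons hyl.2.symm SimpleGraph.Walk.nil)).IsPath := by
    rw [SimpleGraph.Walk.isPath_def]
    simp [hxne.2, hxy, hyne.2, Ne.symm hyne.2]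
  have h1 : dist n d v x y ≤ wtE n d v x V.l + wtE n d v V.l y := by
    apply Nat.sInf_le
    exact ⟨_, hpl, by rw [wWeight_cons, wWeight_cons, wWeight_nil]; omega⟩
  have h2 : dist n d v x y ≤ wtE n d v x V.r + wtE n d v V.r y := by
    apply Nat.sInf_le
    exact ⟨_, hpr, by rw [wWeight_cons, wWeight_cons, wWeight_nil]; omega⟩
  have hne : {m | ∃ p : (G n d v).Walk x y, p.IsPath ∧ wWeight p = m}.Nonempty :=
    ⟨_, _, hpl, rfl⟩
  obtain ⟨p, hp, hw⟩ := Nat.sInf_mem hne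
  have h3 := weight_lb hx hy hxy p hp
  rw [hw] at h3
  exact le_antisymm (le_min h1 h2) h3

lemma isU_U {k : Fin n} {j : Fin d} : isU (V.U k j) := ⟨k, j, Or.inl rfl⟩
lemma isU_U' {k : Fin n} {j : Fin d} : isU (V.U' k j) := ⟨k, j, Or.inr rfl⟩

lemma mem_SF {k : Fin n} {x : V n d} :
    x ∈ SF n d k ↔ (∃ j, x = V.U k j) ∨ (∃ j, x = V.U' k j) := by
  simp [SF, eq_comm]

lemma sup_eq (n d : ℕ) (hd : 1 ≤ d) (v : Fin n → Fin d → Fin 2) (a b : Fin n) (hab : a ≠ b) :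
    maxDist n d v a b =
      (2 * d + 1) * 4 + (Finset.univ.sup fun i : Fin d => (v a i).val + (v b i).val) := by
  set s := Finset.univ.sup fun i : Fin d => (v a i).val + (v b i).val with hs
  apply le_antisymm
  · apply Finset.sup_le
    rintro ⟨x, y⟩ hxy
    rw [Finset.mem_product] at hxy
    obtain ⟨hx, hy⟩ := hxy
    rw [mem_SF] at hx hy
    have key : ∀ (i j : Fin d), ∀ x y : V n d, isU x → isU y → x ≠ y →
        wtE n d v x V.l = (i.val + 1) * 4 + (v a i).val ∨
          wtE n d v x V.l = (2 * d - i.val) * 4 + (v a i).val → True := fun _ _ _ _ _ _ _ _ => trivial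
    clear key
    rcases hx with ⟨i, rfl⟩ | ⟨i, rfl⟩ <;> rcases hy with ⟨j, rfl⟩ | ⟨j, rfl⟩ <;>
    · rw [dist_eq (by first | exact isU_U | exact isU_U')
        (by first | exact isU_U | exact isU_U') (by simp [hab])]
      have hi := i.isLt
      have hj := j.isLt
      have hvi := (v a i).isLt
      have hvj := (v b j).isLt
      have hsi : (v a i).val + (v b i).val ≤ s := by
        simpa using Finset.le_sup (f := fun i : Fin d => (v a i).val + (v b i).val)
          (Finset.mem_univ i)
      have hsj : (v a j).val + (v b j).val ≤ s := by
        simpa using Finset.le_sup (f := fun i : Fin d => (v a i).val + (v b i).val)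
          (Finset.mem_univ j)
      rcases eq_or_ne i j with rfl | hij
      · simp only [wtE, wt0, M]
        omega
      · have hij' : i.val ≠ j.val := fun h => hij (Fin.ext h)
        simp only [wtE, wt0, M]
        omega
  · have hne : (Finset.univ : Finset (Fin d)).Nonempty := by
      have : 0 < d := hd
      exact ⟨⟨0, this⟩, Finset.mem_univ _⟩
    obtain ⟨i₀, -, hi₀⟩ := Finset.exists_mem_eq_sup Finset.univ hne
      fun i : Fin d => (v a i).val + (v b i).val
    rw [← hs] at hi₀
    have hmem : (V.U a i₀, V.U' b i₀) ∈ SF n d a ×ˢ SF n d b := by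
      rw [Finset.mem_product, mem_SF, mem_SF]
      exact ⟨Or.inl ⟨i₀, rfl⟩, Or.inr ⟨i₀, rfl⟩⟩
    have := Finset.le_sup (f := fun p : V n d × V n d => dist n d v p.1 p.2) hmem
    refine le_trans ?_ this
    show _ ≤ dist n d v (V.U a i₀) (V.U' b i₀)
    rw [dist_eq isU_U isU_U' (by simp)]
    have hi := i₀.isLt
    simp only [wtE, wt0, M]
    omega


end Main

/-- For `a ≠ b`: `Max-Dist(S_a, S_b) = (2d+1)·M + max_i (v_a[i] + v_b[i])`; consequently it
is at most `(2d+1)·M + 1` if `v_a, v_b` are orthogonal and equals `(2d+1)·M + 2`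
otherwise. -/
theorem maxDist_formula (n d : ℕ) (hn : 2 ≤ n) (hd : 1 ≤ d)
    (v : Fin n → Fin d → Fin 2) (a b : Fin n) (hab : a ≠ b) :
    maxDist n d v a b =
      (2 * d + 1) * M + (Finset.univ.sup fun i : Fin d => (v a i).val + (v b i).val)
    ∧ ((∀ i : Fin d, (v a i).val * (v b i).val = 0) →
        maxDist n d v a b ≤ (2 * d + 1) * M + 1)
    ∧ (¬(∀ i : Fin d, (v a i).val * (v b i).val = 0) →
        maxDist n d v a b = (2 * d + 1) * M + 2) := by
  have h0 := sup_eq n d hd v a b hab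
  refine ⟨by rw [h0]; rfl, ?_, ?_⟩
  · intro hor
    rw [h0]
    have : (Finset.univ.sup fun i : Fin d => (v a i).val + (v b i).val) ≤ 1 := by
      apply Finset.sup_le
      intro i _
      have h1 := (v a i).isLt
      have h2 := (v b i).isLt
      rcases Nat.mul_eq_zero.mp (hor i) with h | h <;> omega
    show (2*d+1)*4 + _ ≤ (2*d+1)*4 + 1
    omega
  · intro hor
    push_neg at hor
    obtain ⟨i, hi⟩ := hor
    have h1 := (v a i).isLt
    have h2 := (v b i).isLt
    have hv1 : (v a i).val = 1 := by
      rcases Nat.eq_zero_or_pos (v a i).val with h | h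
      · exact absurd (by rw [h, zero_mul]) hi
      · omega
    have hv2 : (v b i).val = 1 := by
      rcases Nat.eq_zero_or_pos (v b i).val with h | h
      · exact absurd (by rw [h, mul_zero]) hi
      · omega
    have hge : 2 ≤ Finset.univ.sup fun i : Fin d => (v a i).val + (v b i).val := by
      have h3 : (v a i).val + (v b i).val ≤
          Finset.univ.sup fun i : Fin d => (v a i).val + (v b i).val := by
        simpa using Finset.le_sup (f := fun i : Fin d => (v a i).val + (v b i).val)
          (Finset.mem_univ i)
      omega
    have hle : (Finset.univ.sup fun i : Fin d => (v a i).val + (v b i).val) ≤ 2 := by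
      apply Finset.sup_le
      intro i _
      have h1 := (v a i).isLt
      have h2 := (v b i).isLt
      omega
    rw [h0]
    show (2*d+1)*4 + _ = (2*d+1)*4 + 2
    omega


end OVGadget
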